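/- Let P and Q be Borel probability measures on ℝ^d such that liminf_{r→0} P(B(x,r))/r^d > 0 for every x ∈ supp(P) and liminf_{r→0} Q(B(y,r))/r^d > 0 for every y ∈ supp(Q). Let K : ℝ^d → ℝ be a nonnegative, compactly supported kernel with K(0) > 0 that is continuous at 0. Let {h_n}, {h_m} be positive bandwidths tending to 0, and let {c_n}, {c_m} be nonnegative real sequences tending to 0. Define B_{n,m} = (supp(P) \ p_{h_n}^{-1}([2c_n, ∞))) ∪ q_{h_m}^{-1}((0, 2c_m)) ∪ (supp(p_{h_n}) \ supp(P)), where p_h and q_h are the average kernel density estimators of P and Q respectively. Then B_{n,m} decreases to the empty set pointwise, and in particular Q(B_{n,m}) → 0 as n, m → ∞. -/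

import Mathlib

open MeasureTheory Metric Filter
open scoped ENNReal

/-- The support of a measure `P`: points all of whose neighborhoods have positive mass. -/
def msupp {d : ℕ} (P : Measure (EuclideanSpace ℝ (Fin d))) : Set (EuclideanSpace ℝ (Fin d)) :=
  {x | ∀ r > 0, 0 < P (ball x r)}

/-- The average kernel density estimator `p_h(x) = ∫ h^{-d} K((x-y)/h) dP(y)`
(for a nonnegative kernel, as a Lebesgue integral). -/
noncomputable def avgKDE {d : ℕ} (P : Measure (EuclideanSpace ℝ (Fin d)))
    (K : EuclideanSpace ℝ (Fin d) → ℝ) (h : ℝ) (x : EuclideanSpace ℝ (Fin d)) : ℝ≥0∞ :=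
  ∫⁻ y, ENNReal.ofReal ((1 / h ^ d) * K (h⁻¹ • (x - y))) ∂P

/-- The set `B_{n,m} = (supp(P) \ p_{h_n}^{-1}[2c_n, ∞)) ∪ q_{h_m}^{-1}(0, 2c'_m)
∪ (supp(p_{h_n}) \ supp(P))`. -/
noncomputable def Bnm {d : ℕ} (P Q : Measure (EuclideanSpace ℝ (Fin d)))
    (K : EuclideanSpace ℝ (Fin d) → ℝ) (h hm : ℕ → ℝ) (c c' : ℕ → ℝ) (n m : ℕ) :
    Set (EuclideanSpace ℝ (Fin d)) :=
  (msupp P \ {x | ENNReal.ofReal (2 * c n) ≤ avgKDE P K (h n) x}) ∪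
    {x | 0 < avgKDE Q K (hm m) x ∧ avgKDE Q K (hm m) x < ENNReal.ofReal (2 * c' m)} ∪
    (Function.support (avgKDE P K (h n)) \ msupp P)

lemma avgKDE_measurable {d : ℕ} (P : Measure (EuclideanSpace ℝ (Fin d))) [SFinite P]
    {K : EuclideanSpace ℝ (Fin d) → ℝ} (hK : Measurable K) (h : ℝ) :
    Measurable (avgKDE P K h) := by
  unfold avgKDE
  have hf : Measurable fun p : EuclideanSpace ℝ (Fin d) × EuclideanSpace ℝ (Fin d) =>
      ENNReal.ofReal ((1 / h ^ d) * K (h⁻¹ • (p.1 - p.2))) :=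
    ENNReal.measurable_ofReal.comp
      (measurable_const.mul (hK.comp ((measurable_fst.sub measurable_snd).const_smul h⁻¹)))
  exact hf.lintegral_prod_right'

lemma msupp_isClosed {d : ℕ} (P : Measure (EuclideanSpace ℝ (Fin d))) :
    IsClosed (msupp P) := by
  rw [← isOpen_compl_iff, Metric.isOpen_iff]
  intro x hx
  simp only [msupp, Set.mem_compl_iff, Set.mem_setOf_eq, not_forall, not_lt] at hx
  obtain ⟨r, hr, h0⟩ := hx
  refine ⟨r / 2, by linarith, fun y hy => ?_⟩
  simp only [msupp, Set.mem_compl_iff, Set.mem_setOf_eq, not_forall, not_lt]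
  refine ⟨r / 2, by linarith, ?_⟩
  have hsub : ball y (r / 2) ⊆ ball x r := by
    apply ball_subset_ball'
    simp only [mem_ball] at hy
    linarith [dist_comm y x ▸ hy]
  exact le_trans (measure_mono hsub) h0

lemma avgKDE_zero_off_supp {d : ℕ} (μ : Measure (EuclideanSpace ℝ (Fin d)))
    {K : EuclideanSpace ℝ (Fin d) → ℝ} (hKsupp : HasCompactSupport K)
    {x : EuclideanSpace ℝ (Fin d)} (hx : x ∉ msupp μ)
    (hs : ℕ → ℝ) (hpos : ∀ n, 0 < hs n) (hlim : Tendsto hs atTop (nhds 0)) :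
    ∀ᶠ n in atTop, avgKDE μ K (hs n) x = 0 := by
  simp only [msupp, Set.mem_setOf_eq, not_forall, not_lt] at hx
  obtain ⟨r, hr, hr0⟩ := hx
  have hr0' : μ (ball x r) = 0 := le_antisymm hr0 zero_le
  obtain ⟨R, hR⟩ := (hKsupp.isBounded).subset_closedBall 0
  set R' : ℝ := max R 0 + 1 with hR'def
  have hR'pos : 0 < R' := by positivity
  have hKzero : ∀ y : EuclideanSpace ℝ (Fin d), R' ≤ ‖y‖ → K y = 0 := by
    intro y hy
    by_contra hKy
    have : y ∈ closedBall 0 R := hR (subset_tsupport K hKy)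
    rw [mem_closedBall, dist_zero_right] at this
    have : ‖y‖ ≤ max R 0 := le_trans this (le_max_left _ _)
    linarith
  have hev : ∀ᶠ n in atTop, hs n < r / R' :=
    hlim.eventually_lt_const (by positivity)
  filter_upwards [hev] with n hn
  have hpn := hpos n
  have hzero : ∀ y, y ∉ ball x r →
      ENNReal.ofReal ((1 / (hs n) ^ d) * K ((hs n)⁻¹ • (x - y))) = 0 := by
    intro y hy
    rw [mem_ball, not_lt] at hy
    have hnorm : ‖(hs n)⁻¹ • (x - y)‖ = ‖x - y‖ / hs n := by
      rw [norm_smul, Real.norm_eq_abs, abs_inv, abs_of_pos hpn, div_eq_inv_mul]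
    have hd : r ≤ ‖x - y‖ := by
      rw [← dist_eq_norm]
      rw [dist_comm]
      exact hy.trans_eq (dist_comm y x ▸ rfl)
    have : R' ≤ ‖(hs n)⁻¹ • (x - y)‖ := by
      rw [hnorm]
      rw [le_div_iff₀ hpn]
      calc R' * hs n ≤ R' * (r / R') := by nlinarith
        _ = r := by field_simp
        _ ≤ ‖x - y‖ := hd
    rw [hKzero _ this, mul_zero, ENNReal.ofReal_zero]
  unfold avgKDE
  have hae : ∀ᵐ y ∂μ, ENNReal.ofReal ((1 / (hs n) ^ d) * K ((hs n)⁻¹ • (x - y))) = 0 := by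
    rw [ae_iff]
    apply measure_mono_null _ hr0'
    intro y hy
    simp only [Set.mem_setOf_eq] at hy
    by_contra hyb
    exact hy (hzero y hyb)
  calc ∫⁻ y, ENNReal.ofReal ((1 / (hs n) ^ d) * K ((hs n)⁻¹ • (x - y))) ∂μ
      = ∫⁻ _, 0 ∂μ := lintegral_congr_ae hae
    _ = 0 := lintegral_zero

lemma avgKDE_lower_bound {d : ℕ} (μ : Measure (EuclideanSpace ℝ (Fin d)))
    {K : EuclideanSpace ℝ (Fin d) → ℝ} (hK0 : ∀ y, 0 ≤ K y)
    (hKpos : 0 < K 0) (hKcont : ContinuousAt K 0)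
    {x : EuclideanSpace ℝ (Fin d)}
    (hx : 0 < liminf (fun r : ℝ => μ (ball x r) / ENNReal.ofReal (r ^ d))
        (nhdsWithin (0 : ℝ) (Set.Ioi 0)))
    (hs : ℕ → ℝ) (hpos : ∀ n, 0 < hs n) (hlim : Tendsto hs atTop (nhds 0)) :
    ∃ b : ℝ≥0∞, 0 < b ∧ ∀ᶠ n in atTop, b ≤ avgKDE μ K (hs n) x := by
  -- continuity: ∃ ε > 0, K y > K 0 / 2 on ball 0 ε
  have hev : ∀ᶠ y in nhds (0 : EuclideanSpace ℝ (Fin d)), K 0 / 2 < K y :=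
    hKcont.eventually (eventually_gt_nhds (half_lt_self hKpos))
  rw [Metric.eventually_nhds_iff] at hev
  obtain ⟨ε, hε, hball⟩ := hev
  -- liminf: get a and δ
  obtain ⟨a, ha0, haL⟩ := exists_between hx
  have hev2 := eventually_lt_of_lt_liminf haL
  rw [eventually_nhdsWithin_iff, Metric.eventually_nhds_iff] at hev2
  obtain ⟨δ, hδ, hδr⟩ := hev2
  refine ⟨a * ENNReal.ofReal (K 0 / 2 * ε ^ d), ?_, ?_⟩
  · exact ENNReal.mul_pos (ne_of_gt ha0) (by
      simp only [ne_eq, ENNReal.ofReal_eq_zero, not_le]; positivity)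
  have hevn : ∀ᶠ n in atTop, hs n < δ / ε := hlim.eventually_lt_const (by positivity)
  filter_upwards [hevn] with n hn
  set h := hs n with hdef
  have hpn : 0 < h := hpos n
  -- ball measure lower bound at radius ε * h
  have hrmem : ε * h < δ := by
    rw [lt_div_iff₀ hε] at hn; nlinarith
  have hkey : a < μ (ball x (ε * h)) / ENNReal.ofReal ((ε * h) ^ d) := by
    apply hδr
    · rw [Real.dist_eq, sub_zero, abs_of_pos (by positivity)]; exact hrmem
    · exact Set.mem_Ioi.mpr (by positivity)
  have hY0 : ENNReal.ofReal ((ε * h) ^ d) ≠ 0 := by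
    simp only [ne_eq, ENNReal.ofReal_eq_zero, not_le]; positivity
  have hYtop : ENNReal.ofReal ((ε * h) ^ d) ≠ ⊤ := ENNReal.ofReal_ne_top
  have hmeas : a * ENNReal.ofReal ((ε * h) ^ d) ≤ μ (ball x (ε * h)) :=
    (ENNReal.le_div_iff_mul_le (Or.inl hY0) (Or.inl hYtop)).1 hkey.le
  -- pointwise lower bound on the ball
  have hptwise : ∀ y ∈ ball x (ε * h),
      ENNReal.ofReal ((1 / h ^ d) * (K 0 / 2)) ≤
        ENNReal.ofReal ((1 / h ^ d) * K (h⁻¹ • (x - y))) := by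
    intro y hy
    apply ENNReal.ofReal_le_ofReal
    apply mul_le_mul_of_nonneg_left _ (by positivity)
    apply le_of_lt
    apply hball
    rw [dist_zero_right, norm_smul, Real.norm_eq_abs, abs_inv, abs_of_pos hpn,
      inv_mul_eq_div, div_lt_iff₀ hpn, ← dist_eq_norm]
    rw [mem_ball] at hy
    calc dist x y = dist y x := dist_comm _ _
      _ < ε * h := hy
  -- put it together
  have hlow : ENNReal.ofReal ((1 / h ^ d) * (K 0 / 2)) * μ (ball x (ε * h)) ≤
      avgKDE μ K h x := by
    calc ENNReal.ofReal ((1 / h ^ d) * (K 0 / 2)) * μ (ball x (ε * h))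
        = ∫⁻ _ in ball x (ε * h), ENNReal.ofReal ((1 / h ^ d) * (K 0 / 2)) ∂μ := by
          rw [setLIntegral_const, mul_comm]
      _ ≤ ∫⁻ y in ball x (ε * h), ENNReal.ofReal ((1 / h ^ d) * K (h⁻¹ • (x - y))) ∂μ := by
          apply setLIntegral_mono' measurableSet_ball hptwise
      _ ≤ avgKDE μ K h x := setLIntegral_le_lintegral _ _
  refine le_trans ?_ hlow
  calc a * ENNReal.ofReal (K 0 / 2 * ε ^ d)
      = ENNReal.ofReal ((1 / h ^ d) * (K 0 / 2)) * (a * ENNReal.ofReal ((ε * h) ^ d)) := by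
        rw [← mul_assoc, mul_comm _ a, mul_assoc, ← ENNReal.ofReal_mul (by positivity)]
        congr 2
        rw [mul_pow]
        field_simp
    _ ≤ ENNReal.ofReal ((1 / h ^ d) * (K 0 / 2)) * μ (ball x (ε * h)) := by
        exact mul_le_mul_right hmeas _

theorem stmt15 {d : ℕ} (P Q : Measure (EuclideanSpace ℝ (Fin d)))
    [IsProbabilityMeasure P] [IsProbabilityMeasure Q]
    (hP : ∀ x ∈ msupp P,
      0 < liminf (fun r : ℝ => P (ball x r) / ENNReal.ofReal (r ^ d))
        (nhdsWithin (0 : ℝ) (Set.Ioi 0)))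
    (hQ : ∀ y ∈ msupp Q,
      0 < liminf (fun r : ℝ => Q (ball y r) / ENNReal.ofReal (r ^ d))
        (nhdsWithin (0 : ℝ) (Set.Ioi 0)))
    (K : EuclideanSpace ℝ (Fin d) → ℝ) (hK_meas : Measurable K) (hK0 : ∀ y, 0 ≤ K y)
    (hKpos : 0 < K 0) (hKcont : ContinuousAt K 0) (hKsupp : HasCompactSupport K)
    (h hm : ℕ → ℝ) (hhpos : ∀ n, 0 < h n) (hhlim : Tendsto h atTop (nhds 0))
    (hmpos : ∀ m, 0 < hm m) (hmlim : Tendsto hm atTop (nhds 0))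
    (c c' : ℕ → ℝ) (hc0 : ∀ n, 0 ≤ c n) (hclim : Tendsto c atTop (nhds 0))
    (hc'0 : ∀ m, 0 ≤ c' m) (hc'lim : Tendsto c' atTop (nhds 0)) :
    (∀ x, ∃ N : ℕ, ∀ n ≥ N, ∀ m ≥ N, x ∉ Bnm P Q K h hm c c' n m) ∧
      Tendsto (fun nm : ℕ × ℕ => Q (Bnm P Q K h hm c c' nm.1 nm.2)) atTop (nhds 0) := by
  have hpt : ∀ x, ∃ N : ℕ, ∀ n ≥ N, ∀ m ≥ N, x ∉ Bnm P Q K h hm c c' n m := by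
    intro x
    have hEn : ∀ᶠ n in atTop,
        x ∉ (msupp P \ {x | ENNReal.ofReal (2 * c n) ≤ avgKDE P K (h n) x}) ∧
        x ∉ (Function.support (avgKDE P K (h n)) \ msupp P) := by
      by_cases hxP : x ∈ msupp P
      · obtain ⟨b, hb0, hbev⟩ := avgKDE_lower_bound P hK0 hKpos hKcont (hP x hxP) h hhpos hhlim
        have htc : Tendsto (fun n => ENNReal.ofReal (2 * c n)) atTop (nhds 0) := by
          have h2c : Tendsto (fun n => 2 * c n) atTop (nhds 0) := by
            simpa using hclim.const_mul 2
          simpa using ENNReal.tendsto_ofReal h2c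
        have hcev : ∀ᶠ n in atTop, ENNReal.ofReal (2 * c n) < b :=
          htc.eventually_lt_const hb0
        filter_upwards [hbev, hcev] with n h1 h2
        refine ⟨fun hmem => hmem.2 (le_trans h2.le h1), fun hmem => hmem.2 hxP⟩
      · have hz := avgKDE_zero_off_supp P hKsupp hxP h hhpos hhlim
        filter_upwards [hz] with n h1
        exact ⟨fun hmem => hxP hmem.1, fun hmem => hmem.1 h1⟩
    have hEm : ∀ᶠ m in atTop,
        x ∉ {x | 0 < avgKDE Q K (hm m) x ∧ avgKDE Q K (hm m) x < ENNReal.ofReal (2 * c' m)} := by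
      by_cases hxQ : x ∈ msupp Q
      · obtain ⟨b, hb0, hbev⟩ := avgKDE_lower_bound Q hK0 hKpos hKcont (hQ x hxQ) hm hmpos hmlim
        have htc : Tendsto (fun m => ENNReal.ofReal (2 * c' m)) atTop (nhds 0) := by
          have h2c : Tendsto (fun m => 2 * c' m) atTop (nhds 0) := by
            simpa using hc'lim.const_mul 2
          simpa using ENNReal.tendsto_ofReal h2c
        have hcev : ∀ᶠ m in atTop, ENNReal.ofReal (2 * c' m) < b :=
          htc.eventually_lt_const hb0
        filter_upwards [hbev, hcev] with m h1 h2 hmem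
        exact absurd (lt_of_lt_of_le (hmem.2.trans h2) h1) (lt_irrefl _)
      · have hz := avgKDE_zero_off_supp Q hKsupp hxQ hm hmpos hmlim
        filter_upwards [hz] with m h1 hmem
        rw [h1] at hmem
        exact lt_irrefl _ hmem.1
    obtain ⟨N1, hN1⟩ := eventually_atTop.1 hEn
    obtain ⟨N2, hN2⟩ := eventually_atTop.1 hEm
    refine ⟨max N1 N2, fun n hn m hmm hx => ?_⟩
    have hn1 := hN1 n (le_trans (le_max_left _ _) hn)
    have hm2 := hN2 m (le_trans (le_max_right _ _) hmm)
    rcases hx with (h1 | h2) | h3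
    · exact hn1.1 h1
    · exact hm2 h2
    · exact hn1.2 h3
  refine ⟨hpt, ?_⟩
  set B := fun n m => Bnm P Q K h hm c c' n m with hBdef
  have hBmeas : ∀ n m, MeasurableSet (B n m) := by
    intro n m
    have hmP : MeasurableSet (msupp P) := (msupp_isClosed P).measurableSet
    have h1 : Measurable (avgKDE P K (h n)) := avgKDE_measurable P hK_meas _
    have h2 : Measurable (avgKDE Q K (hm m)) := avgKDE_measurable Q hK_meas _
    refine MeasurableSet.union (MeasurableSet.union ?_ ?_) ?_
    · exact hmP.diff (measurableSet_le measurable_const h1)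
    · have : {x | 0 < avgKDE Q K (hm m) x ∧ avgKDE Q K (hm m) x < ENNReal.ofReal (2 * c' m)} =
          {x | 0 < avgKDE Q K (hm m) x} ∩ {x | avgKDE Q K (hm m) x < ENNReal.ofReal (2 * c' m)} :=
        rfl
      rw [this]
      exact (measurableSet_lt measurable_const h2).inter (measurableSet_lt h2 measurable_const)
    · have : Function.support (avgKDE P K (h n)) = (avgKDE P K (h n)) ⁻¹' {0}ᶜ := by
        rw [Function.support_eq_preimage]
      rw [this]
      exact (h1 (measurableSet_singleton 0).compl).diff hmP
  set C := fun N : ℕ => ⋃ n, ⋃ (_ : N ≤ n), ⋃ m, ⋃ (_ : N ≤ m), B n m with hCdef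
  have hCmeas : ∀ N, MeasurableSet (C N) := fun N =>
    MeasurableSet.iUnion fun n => MeasurableSet.iUnion fun _ =>
      MeasurableSet.iUnion fun m => MeasurableSet.iUnion fun _ => hBmeas n m
  have hCanti : Antitone C := by
    intro N N' hNN'
    refine Set.iUnion₂_subset fun n hn => Set.iUnion₂_subset fun m hmm => ?_
    exact Set.subset_iUnion₂_of_subset n (le_trans hNN' hn)
      (Set.subset_iUnion₂_of_subset m (le_trans hNN' hmm) subset_rfl)
  have hCempty : ⋂ N, C N = ∅ := by
    rw [Set.eq_empty_iff_forall_notMem]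
    intro x hx
    obtain ⟨N, hN⟩ := hpt x
    rw [Set.mem_iInter] at hx
    have hxN : x ∈ ⋃ n, ⋃ (_ : N ≤ n), ⋃ m, ⋃ (_ : N ≤ m), B n m := hx N
    rw [Set.mem_iUnion₂] at hxN
    obtain ⟨n, hn, hxm⟩ := hxN
    rw [Set.mem_iUnion₂] at hxm
    obtain ⟨m, hmm, hmem⟩ := hxm
    exact hN n hn m hmm hmem
  have hC0 : Tendsto (fun N => Q (C N)) atTop (nhds 0) := by
    have := tendsto_measure_iInter_atTop (μ := Q)
      (fun N => (hCmeas N).nullMeasurableSet) hCanti ⟨0, measure_ne_top Q _⟩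
    rw [hCempty, measure_empty] at this
    exact this
  have hmin : Tendsto (fun nm : ℕ × ℕ => min nm.1 nm.2) atTop atTop :=
    tendsto_atTop_atTop.2 fun b => ⟨(b, b), fun nm hnm => le_min hnm.1 hnm.2⟩
  have hup : Tendsto (fun nm : ℕ × ℕ => Q (C (min nm.1 nm.2))) atTop (nhds 0) := hC0.comp hmin
  apply tendsto_of_tendsto_of_tendsto_of_le_of_le tendsto_const_nhds hup
  · intro nm
    exact zero_le
  · intro nm
    apply measure_mono
    intro y hy
    exact Set.mem_iUnion₂.mpr ⟨nm.1, min_le_left _ _,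
      Set.mem_iUnion₂.mpr ⟨nm.2, min_le_right _ _, hy⟩⟩
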